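/- Let (T_ℓ) be a sequence of meshes with T_{ℓ+1} a refinement of T_ℓ (marked elements are refined; every element is the union of its children), and let T_∞ := ∪_{ℓ'} ∩_{ℓ≥ℓ'} T_ℓ be the set of never-again-refined elements. Then there exists a subsequence (T_{ℓ_k}) such that T_{ℓ_k} ∩ T_{ℓ_{k+n}} = T_{ℓ_k} ∩ T_∞ for all k ∈ ℕ₀ and n ∈ ℕ. -/
import Mathlib

/-- Interval property: between two occurrences the element stays in the mesh. -/
lemma stmt_10_interval {α : Type*} (T : ℕ → Finset α)
    (hgone : ∀ t k, t ∈ T k → t ∉ T (k + 1) → ∀ ℓ, k < ℓ → t ∉ T ℓ)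
    (t : α) (a b : ℕ) (ha : t ∈ T a) (hb : t ∈ T b) :
    ∀ c, a ≤ c → c ≤ b → t ∈ T c := by
  intro c hac hcb
  induction c, hac using Nat.le_induction with
  | base => exact ha
  | succ c hc ih =>
    have htc : t ∈ T c := ih (Nat.le_of_succ_le hcb)
    by_contra h
    exact hgone t c htc h b (Nat.lt_of_succ_le hcb) hb

/-- For every element there is a threshold after which membership stabilizes. -/
lemma stmt_10_bound {α : Type*} (T : ℕ → Finset α)
    (hgone : ∀ t k, t ∈ T k → t ∉ T (k + 1) → ∀ ℓ, k < ℓ → t ∉ T ℓ)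
    (t : α) :
    ∃ N, ∀ m, N ≤ m → (t ∈ T m ↔ t ∈ {t | ∃ ℓ', ∀ ℓ, ℓ' ≤ ℓ → t ∈ T ℓ}) := by
  by_cases hS : ∃ ℓ', ∀ ℓ, ℓ' ≤ ℓ → t ∈ T ℓ
  · obtain ⟨ℓ', hℓ'⟩ := hS
    exact ⟨ℓ', fun m hm => ⟨fun _ => ⟨ℓ', hℓ'⟩, fun _ => hℓ' m hm⟩⟩
  · by_cases hA : ∃ a, t ∈ T a
    · obtain ⟨a, ha⟩ := hA
      have : ∃ c, a ≤ c ∧ t ∉ T c := by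
        by_contra h
        push_neg at h
        exact hS ⟨a, h⟩
      obtain ⟨c, hac, hc⟩ := this
      refine ⟨c, fun m hm => ⟨fun htm => ?_, fun hSt => absurd hSt hS⟩⟩
      exact absurd (stmt_10_interval T hgone t a m ha htm c hac hm) hc
    · push_neg at hA
      exact ⟨0, fun m _ => ⟨fun h => absurd h (hA m), fun hSt => absurd hSt hS⟩⟩

/-- Subsequence lemma: for a sequence of meshes in which refined elements never reappear,
there is a subsequence `(T_{ℓ_k})` with
`T_{ℓ_k} ∩ T_{ℓ_{k+n}} = T_{ℓ_k} ∩ T_∞` for all `k` and all `n ≥ 1`, where `T_∞` is the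
set of elements that are never again refined. -/
theorem stmt_10 {α : Type*} (T : ℕ → Finset α)
    (hgone : ∀ t k, t ∈ T k → t ∉ T (k + 1) → ∀ ℓ, k < ℓ → t ∉ T ℓ) :
    ∃ φ : ℕ → ℕ, StrictMono φ ∧
      ∀ k n, 0 < n →
        (↑(T (φ k)) ∩ ↑(T (φ (k + n))) : Set α) =
          ↑(T (φ k)) ∩ {t | ∃ ℓ', ∀ ℓ, ℓ' ≤ ℓ → t ∈ T ℓ} := by
  classical
  choose N hN using stmt_10_bound T hgone
  let φ : ℕ → ℕ := fun k => Nat.rec 0 (fun _ p => max (p + 1) ((T p).sup N)) k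
  have hstep : ∀ k, φ (k + 1) = max (φ k + 1) ((T (φ k)).sup N) := fun k => rfl
  have hmono : StrictMono φ := by
    apply strictMono_nat_of_lt_succ
    intro k
    rw [hstep]
    exact lt_of_lt_of_le (Nat.lt_succ_self _) (le_max_left _ _)
  refine ⟨φ, hmono, fun k n hn => ?_⟩
  ext t
  simp only [Set.mem_inter_iff, Finset.coe_inter, Set.mem_setOf_eq, Finset.mem_coe]
  constructor
  · rintro ⟨h1, h2⟩
    refine ⟨h1, ?_⟩
    have hNt : N t ≤ φ (k + n) := by
      calc N t ≤ (T (φ k)).sup N := Finset.le_sup h1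
        _ ≤ φ (k + 1) := by rw [hstep]; exact le_max_right _ _
        _ ≤ φ (k + n) := hmono.monotone (show k + 1 ≤ k + n by omega)
    exact (hN t (φ (k + n)) hNt).mp h2
  · rintro ⟨h1, h2⟩
    refine ⟨h1, ?_⟩
    have hNt : N t ≤ φ (k + n) := by
      calc N t ≤ (T (φ k)).sup N := Finset.le_sup h1
        _ ≤ φ (k + 1) := by rw [hstep]; exact le_max_right _ _
        _ ≤ φ (k + n) := hmono.monotone (show k + 1 ≤ k + n by omega)
    exact (hN t (φ (k + n)) hNt).mpr h2
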